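/- Let C_m and C_n be cycles and let v be any vertex of C_m□C_n. Then the betweenness centrality of v is: B(v) = (1/8)(mn−1)(m+n−4) when m and n are both odd; B(v) = (1/8)(mn² + m(m−4)n + 4) when m and n are both even; and B(v) = (1/8)[mn² + (m²−4m−1)n + 4] when m is odd and n is even. Equivalently, with m=2k₁+1, n=2k₂+1: B(v) = k₁k₂(k₁+k₂) + C(k₁,2) + C(k₂,2); with m=2k₁, n=2k₂: B(v) = k₁k₂(k₁+k₂−2) + 1/2; with m=2k₁+1, n=2k₂: B(v) = k₁k₂(k₁+k₂−1) + (1/2)(k₂−1)². -/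

import Mathlib

open SimpleGraph Finset

/-- The number of shortest `u`-`v` paths (geodesics) in `G`:
the number of paths from `u` to `v` whose length equals the distance `d_G(u,v)`. -/
noncomputable def geodesicCount {V : Type*} (G : SimpleGraph V) (u v : V) : ℕ :=
  Nat.card {p : G.Walk u v // p.IsPath ∧ p.length = G.dist u v}

/-- The number of shortest `u`-`v` paths in `G` that pass through the vertex `x`. -/
noncomputable def geodesicCountThrough {V : Type*} (G : SimpleGraph V) (u v x : V) : ℕ :=
  Nat.card {p : G.Walk u v // p.IsPath ∧ p.length = G.dist u v ∧ x ∈ p.support}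

/-- The pair-dependency of the pair `{u,v}` on `x`:
`δ(u,v|x) = σ(u,v|x) / σ(u,v)`. -/
noncomputable def pairDependency {V : Type*} (G : SimpleGraph V) (u v x : V) : ℚ :=
  (geodesicCountThrough G u v x : ℚ) / (geodesicCount G u v : ℚ)

/-- The betweenness centrality of a vertex `x`: the sum of the pair-dependencies
`σ(u,v|x)/σ(u,v)` over unordered pairs `{u,v}` with `u ≠ v`, `u ≠ x`, `v ≠ x`
(each unordered pair is counted once, hence the factor `1/2` over ordered pairs). -/
noncomputable def betweenness {V : Type*} [Fintype V] [DecidableEq V] (G : SimpleGraph V) (x : V) : ℚ :=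
  (1 / 2) * ∑ u, ∑ v,
    if u ≠ v ∧ u ≠ x ∧ v ≠ x then pairDependency G u v x else 0

section General
variable {V : Type*} [Fintype V] [DecidableEq V] (G : SimpleGraph V)

/-- The finset of geodesics from `u` to `v`. -/
noncomputable def geoFinset (u v : V) : Finset (G.Walk u v) := by
  classical
  exact Set.toFinset {p : G.Walk u v | p.IsPath ∧ p.length = G.dist u v}

lemma mem_geoFinset {u v : V} {p : G.Walk u v} :
    p ∈ geoFinset G u v ↔ p.IsPath ∧ p.length = G.dist u v := by
  classical
  simp [geoFinset]

lemma geodesicCount_eq (u v : V) : geodesicCount G u v = (geoFinset G u v).card := by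
  classical
  rw [geodesicCount, geoFinset]
  exact Nat.card_eq_card_toFinset {p : G.Walk u v | p.IsPath ∧ p.length = G.dist u v}

lemma geodesicCountThrough_eq (u v x : V) :
    geodesicCountThrough G u v x = ((geoFinset G u v).filter (fun p => x ∈ p.support)).card := by
  classical
  rw [geodesicCountThrough]
  letI : Fintype {p : G.Walk u v | p.IsPath ∧ p.length = G.dist u v ∧ x ∈ p.support} :=
    Fintype.ofFinset ((geoFinset G u v).filter (fun p => x ∈ p.support)) (by
      intro p
      simp only [Finset.mem_filter, mem_geoFinset, Set.mem_setOf_eq, and_assoc])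
  have h : Nat.card {p : G.Walk u v | p.IsPath ∧ p.length = G.dist u v ∧ x ∈ p.support}
      = ((geoFinset G u v).filter (fun p => x ∈ p.support)).card := by
    rw [Nat.card_eq_fintype_card]
    exact Fintype.card_ofFinset _ _
  exact h

lemma geodesicCount_pos (hG : G.Connected) (u v : V) : 0 < geodesicCount G u v := by
  classical
  obtain ⟨p, hp, hlen⟩ := hG.exists_path_of_dist u v
  rw [geodesicCount_eq]
  exact Finset.card_pos.mpr ⟨p, (mem_geoFinset (G := G)).mpr ⟨hp, hlen⟩⟩

lemma geodesicCountThrough_endpoint_left (u v : V) :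
    geodesicCountThrough G u v u = geodesicCount G u v := by
  classical
  rw [geodesicCountThrough_eq, geodesicCount_eq]
  congr 1
  apply Finset.filter_true_of_mem
  intro p _
  exact p.start_mem_support

lemma geodesicCountThrough_endpoint_right (u v : V) :
    geodesicCountThrough G u v v = geodesicCount G u v := by
  classical
  rw [geodesicCountThrough_eq, geodesicCount_eq]
  congr 1
  apply Finset.filter_true_of_mem
  intro p _
  exact p.end_mem_support

lemma sum_geodesicCountThrough (u v : V) :
    ∑ x : V, geodesicCountThrough G u v x = geodesicCount G u v * (G.dist u v + 1) := by
  classical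
  simp only [geodesicCountThrough_eq, geodesicCount_eq]
  simp only [Finset.card_filter]
  rw [Finset.sum_comm]
  have h1 : ∀ p ∈ geoFinset G u v,
      (∑ x : V, if x ∈ p.support then 1 else 0) = G.dist u v + 1 := by
    intro p hp
    rw [mem_geoFinset] at hp
    have : (∑ x : V, if x ∈ p.support then 1 else 0) = p.support.toFinset.card := by
      rw [← Finset.card_filter]
      congr 1
      ext y
      simp [List.mem_toFinset]
    rw [this, List.toFinset_card_of_nodup hp.1.support_nodup, Walk.length_support, hp.2]
  rw [Finset.sum_congr rfl h1, Finset.sum_const, smul_eq_mul]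


lemma sum_pairDependency (hG : G.Connected) {u v : V} (huv : u ≠ v) :
    ∑ x : V, (if x ≠ u ∧ x ≠ v then pairDependency G u v x else 0) =
      (G.dist u v : ℚ) - 1 := by
  classical
  have hσ : ((geodesicCount G u v : ℚ)) ≠ 0 := by
    exact_mod_cast (geodesicCount_pos G hG u v).ne'
  have key : ∑ x : V, pairDependency G u v x = (G.dist u v : ℚ) + 1 := by
    simp only [pairDependency, ← Finset.sum_div]
    rw [← Nat.cast_sum, sum_geodesicCountThrough]
    push_cast
    field_simp
  have hu1 : pairDependency G u v u = 1 := by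
    rw [pairDependency, geodesicCountThrough_endpoint_left, div_self hσ]
  have hv1 : pairDependency G u v v = 1 := by
    rw [pairDependency, geodesicCountThrough_endpoint_right, div_self hσ]
  have hsplit : ∀ x : V, (if x ≠ u ∧ x ≠ v then pairDependency G u v x else 0) =
      pairDependency G u v x - (if x = u then 1 else 0) - (if x = v then 1 else 0) := by
    intro x
    by_cases hxu : x = u <;> by_cases hxv : x = v
    · subst hxu; exact absurd hxv huv
    · simp [hxu, hxv, hu1, huv, Ne.symm huv]
    · simp [hxu, hxv, hv1, Ne.symm huv]
    · simp [hxu, hxv]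
  rw [Finset.sum_congr rfl (fun x _ => hsplit x)]
  simp only [Finset.sum_sub_distrib, key, Finset.sum_ite_eq' Finset.univ, Finset.mem_univ,
    if_true]
  ring

lemma sum_betweenness (hG : G.Connected) :
    ∑ x : V, betweenness G x =
      (1 / 2) * ∑ u : V, ∑ v : V, (if u ≠ v then (G.dist u v : ℚ) - 1 else 0) := by
  classical
  simp only [betweenness, ← Finset.mul_sum]
  congr 1
  rw [Finset.sum_comm]
  refine Finset.sum_congr rfl (fun u _ => ?_)
  rw [Finset.sum_comm]
  refine Finset.sum_congr rfl (fun v _ => ?_)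
  by_cases huv : u ≠ v
  · rw [if_pos huv, ← sum_pairDependency G hG huv]
    refine Finset.sum_congr rfl (fun x _ => ?_)
    by_cases hxu : x = u
    · simp [hxu]
    · by_cases hxv : x = v
      · simp [hxv]
      · simp [hxu, hxv, Ne.symm hxu, Ne.symm hxv, huv]
  · simp only [if_neg huv]
    push_neg at huv
    subst huv
    simp


end General

section IsoInv
variable {V V' : Type*} {G : SimpleGraph V} {G' : SimpleGraph V'}

lemma iso_dist_le (φ : G ≃g G') (u v : V) :
    G'.dist (φ u) (φ v) ≤ G.dist u v := by
  by_cases h : G.Reachable u v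
  · obtain ⟨p, hp⟩ := h.exists_walk_length_eq_dist
    calc G'.dist (φ u) (φ v) ≤ (p.map φ.toHom).length := SimpleGraph.dist_le _
      _ = p.length := by rw [Walk.length_map]
      _ = G.dist u v := hp
  · rw [SimpleGraph.dist_eq_zero_of_not_reachable h]
    have h' : ¬G'.Reachable (φ u) (φ v) := fun h' => h (by
      have := h'.map φ.symm.toHom
      simpa using this)
    simp [SimpleGraph.dist_eq_zero_of_not_reachable h']

lemma iso_dist (φ : G ≃g G') (u v : V) :
    G'.dist (φ u) (φ v) = G.dist u v := by
  refine le_antisymm (iso_dist_le φ u v) ?_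
  have := iso_dist_le φ.symm (φ u) (φ v)
  simpa using this

lemma iso_comp_symm_toHom (φ : G ≃g G') :
    φ.toHom.comp φ.symm.toHom = Hom.id := by
  ext x
  exact φ.apply_symm_apply x

lemma finite_geodesics {V : Type*} [Fintype V] (G : SimpleGraph V) (u v : V)
    (Q : G.Walk u v → Prop) :
    Finite {p : G.Walk u v // (p.IsPath ∧ p.length = G.dist u v) ∧ Q p} := by
  classical
  haveI : LocallyFinite G := fun w => Fintype.ofFinite _
  haveI : Finite {p : G.Walk u v // p.IsPath ∧ p.length = G.dist u v} :=
    Finite.of_fintype _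
  exact Finite.of_injective
    (fun p => (⟨p.1, p.2.1⟩ : {p : G.Walk u v // p.IsPath ∧ p.length = G.dist u v}))
    (fun a b h => by
      apply Subtype.ext
      have := congrArg Subtype.val h
      simpa using this)

lemma copy_cancel {u v u' v' : V} (hu : u = u') (hv : v = v') {p q : G.Walk u v}
    (h : p.copy hu hv = q.copy hu hv) : p = q := by
  subst hu
  subst hv
  simpa using h

lemma geodesicCount_iso [Fintype V] [Fintype V'] (φ : G ≃g G') (u v : V) :
    geodesicCount G u v = geodesicCount G' (φ u) (φ v) := by
  classical
  have hinj : Function.Injective (φ : V → V') := φ.toEquiv.injective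
  have hinj' : Function.Injective (φ.symm : V' → V) := φ.symm.toEquiv.injective
  haveI h1 : Finite {p : G.Walk u v // p.IsPath ∧ p.length = G.dist u v} := by
    have := finite_geodesics G u v (fun _ => True)
    exact Finite.of_surjective (fun p : {p : G.Walk u v // (p.IsPath ∧ p.length = G.dist u v) ∧ True} =>
      (⟨p.1, p.2.1⟩ : {p : G.Walk u v // p.IsPath ∧ p.length = G.dist u v}))
      (fun q => ⟨⟨q.1, q.2, trivial⟩, rfl⟩)
  haveI h2 : Finite {q : G'.Walk (φ u) (φ v) // q.IsPath ∧ q.length = G'.dist (φ u) (φ v)} := by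
    have := finite_geodesics G' (φ u) (φ v) (fun _ => True)
    exact Finite.of_surjective (fun p : {p : G'.Walk (φ u) (φ v) // (p.IsPath ∧ p.length = G'.dist (φ u) (φ v)) ∧ True} =>
      (⟨p.1, p.2.1⟩ : {p : G'.Walk (φ u) (φ v) // p.IsPath ∧ p.length = G'.dist (φ u) (φ v)}))
      (fun q => ⟨⟨q.1, q.2, trivial⟩, rfl⟩)
  rw [geodesicCount, geodesicCount]
  apply le_antisymm
  · apply Nat.card_le_card_of_injective
      (fun p => (⟨p.1.map φ.toHom, Walk.map_isPath_of_injective hinj p.2.1, by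
        rw [Walk.length_map, iso_dist φ u v]; exact p.2.2⟩ :
        {q : G'.Walk (φ u) (φ v) // q.IsPath ∧ q.length = G'.dist (φ u) (φ v)}))
    intro a b h
    exact Subtype.ext (Walk.map_injective_of_injective hinj u v (congrArg Subtype.val h))
  · apply Nat.card_le_card_of_injective
      (fun q => (⟨(q.1.map φ.symm.toHom).copy (φ.symm_apply_apply u) (φ.symm_apply_apply v),
        (Walk.isPath_copy _ _ _).mpr (Walk.map_isPath_of_injective hinj' q.2.1), by
        rw [Walk.length_copy, Walk.length_map, q.2.2, iso_dist φ u v]⟩ :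
        {p : G.Walk u v // p.IsPath ∧ p.length = G.dist u v}))
    intro a b h
    have h' := copy_cancel _ _ (congrArg Subtype.val h)
    exact Subtype.ext (Walk.map_injective_of_injective hinj' _ _ h')

lemma geodesicCountThrough_iso [Fintype V] [Fintype V'] (φ : G ≃g G') (u v x : V) :
    geodesicCountThrough G u v x = geodesicCountThrough G' (φ u) (φ v) (φ x) := by
  classical
  have hinj : Function.Injective (φ : V → V') := φ.toEquiv.injective
  have hinj' : Function.Injective (φ.symm : V' → V) := φ.symm.toEquiv.injective
  haveI h1 : Finite {p : G.Walk u v // p.IsPath ∧ p.length = G.dist u v ∧ x ∈ p.support} := by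
    have := finite_geodesics G u v (fun p => x ∈ p.support)
    exact Finite.of_surjective (fun p : {p : G.Walk u v // (p.IsPath ∧ p.length = G.dist u v) ∧ x ∈ p.support} =>
      (⟨p.1, p.2.1.1, p.2.1.2, p.2.2⟩ : {p : G.Walk u v // p.IsPath ∧ p.length = G.dist u v ∧ x ∈ p.support}))
      (fun q => ⟨⟨q.1, ⟨q.2.1, q.2.2.1⟩, q.2.2.2⟩, rfl⟩)
  haveI h2 : Finite {q : G'.Walk (φ u) (φ v) // q.IsPath ∧ q.length = G'.dist (φ u) (φ v) ∧ φ x ∈ q.support} := by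
    have := finite_geodesics G' (φ u) (φ v) (fun q => φ x ∈ q.support)
    exact Finite.of_surjective (fun p : {p : G'.Walk (φ u) (φ v) // (p.IsPath ∧ p.length = G'.dist (φ u) (φ v)) ∧ φ x ∈ p.support} =>
      (⟨p.1, p.2.1.1, p.2.1.2, p.2.2⟩ : {p : G'.Walk (φ u) (φ v) // p.IsPath ∧ p.length = G'.dist (φ u) (φ v) ∧ φ x ∈ p.support}))
      (fun q => ⟨⟨q.1, ⟨q.2.1, q.2.2.1⟩, q.2.2.2⟩, rfl⟩)
  rw [geodesicCountThrough, geodesicCountThrough]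
  apply le_antisymm
  · apply Nat.card_le_card_of_injective
      (fun p => (⟨p.1.map φ.toHom, Walk.map_isPath_of_injective hinj p.2.1, by
        rw [Walk.length_map, iso_dist φ u v]; exact p.2.2.1, by
        rw [Walk.support_map, List.mem_map]; exact ⟨x, p.2.2.2, rfl⟩⟩ :
        {q : G'.Walk (φ u) (φ v) // q.IsPath ∧ q.length = G'.dist (φ u) (φ v) ∧ φ x ∈ q.support}))
    intro a b h
    exact Subtype.ext (Walk.map_injective_of_injective hinj u v (congrArg Subtype.val h))
  · apply Nat.card_le_card_of_injective
      (fun q => (⟨(q.1.map φ.symm.toHom).copy (φ.symm_apply_apply u) (φ.symm_apply_apply v),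
        (Walk.isPath_copy _ _ _).mpr (Walk.map_isPath_of_injective hinj' q.2.1), by
        rw [Walk.length_copy, Walk.length_map, q.2.2.1, iso_dist φ u v], by
        rw [Walk.support_copy, Walk.support_map, List.mem_map]
        exact ⟨φ x, q.2.2.2, φ.symm_apply_apply x⟩⟩ :
        {p : G.Walk u v // p.IsPath ∧ p.length = G.dist u v ∧ x ∈ p.support}))
    intro a b h
    have h' := copy_cancel _ _ (congrArg Subtype.val h)
    exact Subtype.ext (Walk.map_injective_of_injective hinj' _ _ h')

lemma pairDependency_iso [Fintype V] [Fintype V'] (φ : G ≃g G') (u v x : V) :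
    pairDependency G u v x = pairDependency G' (φ u) (φ v) (φ x) := by
  rw [pairDependency, pairDependency, geodesicCount_iso φ, geodesicCountThrough_iso φ]

lemma betweenness_iso [Fintype V] [DecidableEq V] [Fintype V'] [DecidableEq V']
    (φ : G ≃g G') (x : V) :
    betweenness G' (φ x) = betweenness G x := by
  rw [betweenness, betweenness]
  congr 1
  rw [← Equiv.sum_comp φ.toEquiv]
  refine Finset.sum_congr rfl (fun u _ => ?_)
  rw [← Equiv.sum_comp φ.toEquiv]
  refine Finset.sum_congr rfl (fun v _ => ?_)
  have hco : ∀ a : V, φ.toEquiv a = φ a := fun _ => rfl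
  have h1 : (φ.toEquiv u ≠ φ.toEquiv v) ↔ (u ≠ v) := by
    simp only [ne_eq, EmbeddingLike.apply_eq_iff_eq]
  have h2 : (φ.toEquiv u ≠ φ x) ↔ (u ≠ x) := by
    rw [hco]
    simp only [ne_eq, EmbeddingLike.apply_eq_iff_eq]
  have h3 : (φ.toEquiv v ≠ φ x) ↔ (v ≠ x) := by
    rw [hco]
    simp only [ne_eq, EmbeddingLike.apply_eq_iff_eq]
  have h4 : pairDependency G' (φ.toEquiv u) (φ.toEquiv v) (φ x) = pairDependency G u v x := by
    rw [hco, hco, ← pairDependency_iso φ]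
  rw [if_congr (by rw [h1, h2, h3]) h4 rfl]

end IsoInv

open scoped Fin.NatCast Fin.CommRing

section FinLemmas

lemma mod2 {x m : ℕ} (hm : 0 < m) (h : x < 2 * m) : x % m = if x < m then x else x - m := by
  split_ifs with h'
  · exact Nat.mod_eq_of_lt h'
  · rw [Nat.mod_eq_sub_mod (by omega), Nat.mod_eq_of_lt (by omega)]

lemma fin_pair_sum {m : ℕ} [NeZero m] (A : Fin m) :
    (A.val + (-A).val = m) ∨ (A.val = 0 ∧ (-A).val = 0) := by
  by_cases h : A = 0
  · subst h; right; simp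
  · left
    have h0 : A.val ≠ 0 := fun hc => h (Fin.ext (by simp [hc]))
    have : (-A).val = (m - A.val) % m := by rw [Fin.neg_def]
    rw [this, Nat.mod_eq_of_lt (by omega)]
    omega

lemma fin_val_add {m : ℕ} [NeZero m] (A B : Fin m) :
    (A + B).val = (A.val + B.val) % m := rfl

end FinLemmas

section CycleDist

variable {m : ℕ}

lemma cycle_adj_val {u v : Fin m} (h : (cycleGraph m).Adj u v) :
    (u - v).val = 1 ∨ (v - u).val = 1 := cycleGraph_adj'.mp h

/-- lower bound -/
lemma cycle_walk_le [NeZero m] {u v : Fin m} (w : (cycleGraph m).Walk u v) :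
    min (v - u).val (u - v).val ≤ w.length := by
  have hm : 0 < m := Nat.pos_of_ne_zero (NeZero.ne m)
  induction w with
  | nil => simp
  | @cons u z v h p ih =>
    rw [Walk.length_cons]
    have key : min (v - u).val (u - v).val ≤ min (v - z).val (z - v).val + 1 := by
      have e1 : v - u = (v - z) + (z - u) := by ring
      have e2 : u - v = (u - z) + (z - v) := by ring
      have hs1 := fin_pair_sum (v - u)
      have hs2 := fin_pair_sum (v - z)
      have huv : -(v - u) = u - v := by ring
      have hzv : -(v - z) = z - v := by ring
      rw [huv] at hs1
      rw [hzv] at hs2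
      rcases cycle_adj_val h with h1 | h1
      · -- (u - z).val = 1
        have : (u - v).val = ((u-z).val + (z-v).val) % m := by rw [e2, fin_val_add]
        rw [h1] at this
        rw [mod2 hm (by have := (z-v).isLt; omega)] at this
        have i1 := (v - u).isLt; have i2 := (u - v).isLt
        have i3 := (v - z).isLt; have i4 := (z - v).isLt
        split_ifs at this <;> omega
      · -- (z - u).val = 1
        have : (v - u).val = ((v-z).val + (z-u).val) % m := by rw [e1, fin_val_add]
        rw [h1] at this
        rw [mod2 hm (by have := (v-z).isLt; omega)] at this
        have i1 := (v - u).isLt; have i2 := (u - v).isLt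
        have i3 := (v - z).isLt; have i4 := (z - v).isLt
        split_ifs at this <;> omega
    omega

lemma cycle_exists_walk [NeZero m] (hm : 2 ≤ m) :
    ∀ (a : ℕ) (u : Fin m), ∃ w : (cycleGraph m).Walk u (u + (↑a : Fin m)), w.length = a := by
  intro a
  induction a with
  | zero => intro u; exact ⟨Walk.nil.copy rfl (by simp), by simp⟩
  | succ a ih =>
    intro u
    obtain ⟨w, hw⟩ := ih (u + 1)
    have hadj : (cycleGraph m).Adj u (u + 1) := by
      rw [cycleGraph_adj']
      right
      rw [add_sub_cancel_left, Fin.val_one']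
      exact Nat.mod_eq_of_lt (by omega)
    have hend : (u + 1) + (↑a : Fin m) = u + (↑(a + 1) : Fin m) := by
      push_cast
      ring
    exact ⟨(Walk.cons hadj (w.copy rfl hend)), by simp [hw]⟩

lemma cycleGraph_dist (hm : 2 ≤ m) (u v : Fin m) :
    (cycleGraph m).dist u v = min (v - u).val (u - v).val := by
  haveI : NeZero m := ⟨by omega⟩
  apply le_antisymm
  · rcases min_cases (v - u).val (u - v).val with ⟨hmin, _⟩ | ⟨hmin, _⟩
    · rw [hmin]
      obtain ⟨w, hw⟩ := cycle_exists_walk hm (v - u).val u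
      have : u + ((v - u).val : Fin m) = v := by
        rw [Fin.cast_val_eq_self]; ring
      calc (cycleGraph m).dist u v = (cycleGraph m).dist u (u + ((v-u).val : Fin m)) := by rw [this]
        _ ≤ w.length := SimpleGraph.dist_le w
        _ = (v - u).val := hw
    · rw [hmin]
      obtain ⟨w, hw⟩ := cycle_exists_walk hm (u - v).val v
      have : v + ((u - v).val : Fin m) = u := by
        rw [Fin.cast_val_eq_self]; ring
      rw [SimpleGraph.dist_comm]
      calc (cycleGraph m).dist v u = (cycleGraph m).dist v (v + ((u-v).val : Fin m)) := by rw [this]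
        _ ≤ w.length := SimpleGraph.dist_le w
        _ = (u - v).val := hw
  · have hconn : (cycleGraph m).Connected := by
      rw [connected_iff]
      exact ⟨cycleGraph_preconnected, ⟨⟨0, by omega⟩⟩⟩
    obtain ⟨w, hw⟩ := (hconn u v).exists_walk_length_eq_dist
    rw [← hw]
    exact cycle_walk_le w

end CycleDist

section BoxDist

variable {α β : Type*} {G : SimpleGraph α} {H : SimpleGraph β}

lemma boxProd_walk_ge (hG : G.Connected) (hH : H.Connected) {x y : α × β}
    (w : (G □ H).Walk x y) :
    G.dist x.1 y.1 + H.dist x.2 y.2 ≤ w.length := by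
  induction w with
  | nil => simp
  | @cons x z y h p ih =>
    rw [Walk.length_cons]
    rcases boxProd_adj.mp h with ⟨ha, hb⟩ | ⟨hb, ha⟩
    · have t1 : G.dist x.1 y.1 ≤ 1 + G.dist z.1 y.1 := by
        calc G.dist x.1 y.1 ≤ G.dist x.1 z.1 + G.dist z.1 y.1 := hG.dist_triangle
          _ ≤ 1 + G.dist z.1 y.1 := by
              have : G.dist x.1 z.1 = 1 := SimpleGraph.dist_eq_one_iff_adj.mpr ha
              omega
      have t2 : H.dist x.2 y.2 = H.dist z.2 y.2 := by rw [hb]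
      omega
    · have t1 : H.dist x.2 y.2 ≤ 1 + H.dist z.2 y.2 := by
        calc H.dist x.2 y.2 ≤ H.dist x.2 z.2 + H.dist z.2 y.2 := hH.dist_triangle
          _ ≤ 1 + H.dist z.2 y.2 := by
              have : H.dist x.2 z.2 = 1 := SimpleGraph.dist_eq_one_iff_adj.mpr hb
              omega
      have t2 : G.dist x.1 y.1 = G.dist z.1 y.1 := by rw [ha]
      omega

lemma boxProd_walk_length_left {a₁ a₂ : α} (b : β) (p : G.Walk a₁ a₂) :
    (p.boxProdLeft H b).length = p.length := by
  exact Walk.length_map _ _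

lemma boxProd_walk_length_right {b₁ b₂ : β} (a : α) (q : H.Walk b₁ b₂) :
    (q.boxProdRight G a).length = q.length := by
  exact Walk.length_map _ _

lemma boxProd_dist (hG : G.Connected) (hH : H.Connected) (x y : α × β) :
    (G □ H).dist x y = G.dist x.1 y.1 + H.dist x.2 y.2 := by
  apply le_antisymm
  · obtain ⟨p, hp⟩ := (hG x.1 y.1).exists_walk_length_eq_dist
    obtain ⟨q, hq⟩ := (hH x.2 y.2).exists_walk_length_eq_dist
    refine le_trans (SimpleGraph.dist_le
      (((p.boxProdLeft H x.2).append (q.boxProdRight G y.1)).copy (by simp) (by simp)))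
      (le_of_eq ?_)
    rw [Walk.length_copy, Walk.length_append, boxProd_walk_length_left,
      boxProd_walk_length_right, hp, hq]
  · obtain ⟨w, hw⟩ := ((hG.boxProd hH) x y).exists_walk_length_eq_dist
    rw [← hw]
    exact boxProd_walk_ge hG hH w

end BoxDist

section Translate

variable {m : ℕ}

def cycleTranslate [NeZero m] (c : Fin m) : cycleGraph m ≃g cycleGraph m where
  toEquiv := Equiv.addRight c
  map_rel_iff' := by
    intro u v
    simp only [Equiv.coe_addRight, cycleGraph_adj']
    rw [add_sub_add_right_eq_sub, add_sub_add_right_eq_sub]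

def boxProdIso {α β α' β' : Type*} {G : SimpleGraph α} {H : SimpleGraph β}
    {G' : SimpleGraph α'} {H' : SimpleGraph β'} (φ : G ≃g G') (ψ : H ≃g H') :
    G.boxProd H ≃g G'.boxProd H' where
  toEquiv := Equiv.prodCongr φ.toEquiv ψ.toEquiv
  map_rel_iff' := by
    rintro ⟨a, b⟩ ⟨c, d⟩
    simp only [Equiv.prodCongr_apply, Prod.map_apply, boxProd_adj]
    constructor
    · rintro (⟨h1, h2⟩ | ⟨h1, h2⟩)
      · exact Or.inl ⟨φ.map_rel_iff.mp h1, ψ.toEquiv.injective h2⟩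
      · exact Or.inr ⟨ψ.map_rel_iff.mp h1, φ.toEquiv.injective h2⟩
    · rintro (⟨h1, h2⟩ | ⟨h1, h2⟩)
      · exact Or.inl ⟨φ.map_rel_iff.mpr h1, congrArg _ h2⟩
      · exact Or.inr ⟨ψ.map_rel_iff.mpr h1, congrArg _ h2⟩

end Translate

section Sums

lemma sum_range_sub_mul_two (n : ℕ) : (∑ j ∈ Finset.range n, (n - j)) * 2 = n * (n + 1) := by
  have h1 : ∑ j ∈ Finset.range n, (n - j) = ∑ j ∈ Finset.range n, (j + 1) := by
    rw [← Finset.sum_range_reflect (fun j => n - j) n]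
    exact Finset.sum_congr rfl (fun j hj => by
      simp only [Finset.mem_range] at hj
      omega)
  rw [h1, Finset.sum_add_distrib, Finset.sum_const, Finset.card_range, smul_eq_mul, mul_one,
    add_mul, Finset.sum_range_id_mul_two]
  cases n with
  | zero => rfl
  | succ s =>
    have hs : s + 1 - 1 = s := rfl
    rw [hs]
    ring

lemma sum_min_eq (m : ℕ) : 4 * (∑ a ∈ Finset.range m, min a (m - a)) = m * m - m % 2 := by
  rcases Nat.eq_zero_or_pos m with h | h
  · subst h; simp
  set k := m / 2 with hk
  have hk1 : k + 1 ≤ m := by omega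
  rw [← Finset.sum_range_add_sum_Ico _ hk1]
  have h1 : ∀ a ∈ Finset.range (k+1), min a (m - a) = a := fun a ha =>
    min_eq_left (by simp only [Finset.mem_range] at ha; omega)
  have h2 : ∀ a ∈ Finset.Ico (k+1) m, min a (m - a) = m - a := fun a ha =>
    min_eq_right (by simp only [Finset.mem_Ico] at ha; omega)
  rw [Finset.sum_congr rfl h1, Finset.sum_congr rfl h2]
  have g1 : (∑ a ∈ Finset.range (k+1), a) * 2 = (k+1) * k := by
    rw [Finset.sum_range_id_mul_two]
    simp
  have g2 : ∑ a ∈ Finset.Ico (k+1) m, (m - a) = ∑ j ∈ Finset.range (m - (k+1)), (m - (k+1) - j) := by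
    rw [Finset.sum_Ico_eq_sum_range]
    exact Finset.sum_congr rfl (fun j hj => by
      simp only [Finset.mem_range] at hj
      omega)
  rw [g2]
  have g3 := sum_range_sub_mul_two (m - (k+1))
  set A := ∑ a ∈ Finset.range (k+1), a with hA
  set B := ∑ j ∈ Finset.range (m - (k+1)), (m - (k+1) - j) with hB
  rcases Nat.even_or_odd m with he | ho
  · -- m even, m = 2k with k ≥ 1
    obtain ⟨c, hc⟩ := he
    obtain ⟨j, hj⟩ : ∃ j, k = j + 1 := ⟨k - 1, by omega⟩
    have hm2 : m = 2 * j + 2 := by omega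
    have hn : m - (k + 1) = j := by omega
    rw [hn] at g3
    rw [hj] at g1
    have e1 : (j + 1 + 1) * (j + 1) = j*j + 3*j + 2 := by ring
    have e2 : j * (j + 1) = j*j + j := by ring
    have e3 : m * m = 4*(j*j) + 8*j + 4 := by rw [hm2]; ring
    have e4 : m % 2 = 0 := by omega
    rw [e1] at g1
    rw [e2] at g3
    generalize j*j = P at g1 g3 e3
    omega
  · -- m odd, m = 2k+1
    have hm2 : m = 2 * k + 1 := by
      rcases ho with ⟨c, hc⟩
      omega
    have hn : m - (k + 1) = k := by omega
    rw [hn] at g3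
    have e1 : (k + 1) * k = k*k + k := by ring
    have e2 : k * (k + 1) = k*k + k := by ring
    have e3 : m * m = 4*(k*k) + 4*k + 1 := by rw [hm2]; ring
    have e4 : m % 2 = 1 := by omega
    rw [e1] at g1
    rw [e2] at g3
    generalize k*k = P at g1 g3 e3
    omega

end Sums


section Bridge

lemma fin_sum_min (m : ℕ) [NeZero m] :
    ∑ c : Fin m, min c.val ((-c).val) = ∑ a ∈ Finset.range m, min a (m - a) := by
  have hneg : ∀ c : Fin m, (-c).val = (m - c.val) % m := fun c => by rw [Fin.neg_def]
  have h1 : ∑ c : Fin m, min c.val ((-c).val)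
      = ∑ a ∈ Finset.range m, min a ((m - a) % m) := by
    rw [← Fin.sum_univ_eq_sum_range (fun i => min i ((m - i) % m)) m]
    exact Finset.sum_congr rfl (fun c _ => by rw [hneg c])
  rw [h1]
  refine Finset.sum_congr rfl (fun a ha => ?_)
  simp only [Finset.mem_range] at ha
  rcases Nat.eq_zero_or_pos a with h | h
  · subst h; simp
  · rw [Nat.mod_eq_of_lt (by omega)]

end Bridge

/-- For cycles `C_m`, `C_n` (`m, n ≥ 3`) and any vertex `v` of
`C_m □ C_n`: if `m`, `n` are both odd then `B(v) = (1/8)(mn-1)(m+n-4)`; if both even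
then `B(v) = (1/8)(mn² + m(m-4)n + 4)`; if `m` is odd and `n` even then
`B(v) = (1/8)[mn² + (m²-4m-1)n + 4]`. -/
theorem betweenness_cycleBoxCycle (m n : ℕ) (hm : 3 ≤ m) (hn : 3 ≤ n)
    (v : Fin m × Fin n) :
    (Odd m → Odd n → betweenness (cycleGraph m □ cycleGraph n) v =
        (1 / 8) * ((m : ℚ) * n - 1) * ((m : ℚ) + n - 4)) ∧
    (Even m → Even n → betweenness (cycleGraph m □ cycleGraph n) v =
        (1 / 8) * ((m : ℚ) * n ^ 2 + (m : ℚ) * ((m : ℚ) - 4) * n + 4)) ∧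
    (Odd m → Even n → betweenness (cycleGraph m □ cycleGraph n) v =
        (1 / 8) * ((m : ℚ) * n ^ 2 + ((m : ℚ) ^ 2 - 4 * m - 1) * n + 4)) := by
  haveI : NeZero m := ⟨by omega⟩
  haveI : NeZero n := ⟨by omega⟩
  have hmconn : (cycleGraph m).Connected := by
    rw [connected_iff]
    exact ⟨cycleGraph_preconnected, ⟨⟨0, by omega⟩⟩⟩
  have hnconn : (cycleGraph n).Connected := by
    rw [connected_iff]
    exact ⟨cycleGraph_preconnected, ⟨⟨0, by omega⟩⟩⟩
  have hGconn : (cycleGraph m □ cycleGraph n).Connected := hmconn.boxProd hnconn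
  set G := cycleGraph m □ cycleGraph n with hG
  -- betweenness is constant
  have hBconst : ∀ x : Fin m × Fin n, betweenness G x = betweenness G v := by
    intro x
    have hφ : (boxProdIso (cycleTranslate (v.1 - x.1)) (cycleTranslate (v.2 - x.2))) x = v := by
      apply Prod.ext
      · show x.1 + (v.1 - x.1) = v.1
        ring
      · show x.2 + (v.2 - x.2) = v.2
        ring
    have hiso := betweenness_iso
      (boxProdIso (cycleTranslate (v.1 - x.1)) (cycleTranslate (v.2 - x.2))) x
    rw [← hiso, hφ]
  have hsum := sum_betweenness G hGconn
  rw [Finset.sum_congr rfl (fun x _ => hBconst x), Finset.sum_const, Finset.card_univ] at hsum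
  have hcard : Fintype.card (Fin m × Fin n) = m * n := by simp
  rw [hcard] at hsum
  -- distance formula
  have hdist : ∀ u w : Fin m × Fin n, G.dist u w =
      min (w.1 - u.1).val (u.1 - w.1).val + min (w.2 - u.2).val (u.2 - w.2).val := by
    intro u w
    rw [hG, boxProd_dist hmconn hnconn, cycleGraph_dist (by omega), cycleGraph_dist (by omega)]
  set Sm := ∑ c : Fin m, min c.val ((-c).val) with hSm
  set Sn := ∑ c : Fin n, min c.val ((-c).val) with hSn
  -- row sums
  have hrowm : ∀ u1 : Fin m, ∑ w1 : Fin m, min (w1 - u1).val (u1 - w1).val = Sm := by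
    intro u1
    rw [hSm]
    apply Fintype.sum_equiv (Equiv.subRight u1)
    intro w1
    have h2 : u1 - w1 = -(w1 - u1) := by ring
    rw [h2]
    rfl
  have hrown : ∀ u2 : Fin n, ∑ w2 : Fin n, min (w2 - u2).val (u2 - w2).val = Sn := by
    intro u2
    rw [hSn]
    apply Fintype.sum_equiv (Equiv.subRight u2)
    intro w2
    have h2 : u2 - w2 = -(w2 - u2) := by ring
    rw [h2]
    rfl
  have hrow : ∀ u : Fin m × Fin n, ∑ w : Fin m × Fin n, (G.dist u w : ℚ)
      = n * Sm + m * Sn := by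
    intro u
    rw [Fintype.sum_prod_type]
    have h1 : ∀ w1 : Fin m, ∑ w2 : Fin n, (G.dist u (w1, w2) : ℚ)
        = n * ((min (w1 - u.1).val (u.1 - w1).val : ℕ) : ℚ) + ∑ w2 : Fin n, ((min (w2 - u.2).val (u.2 - w2).val : ℕ) : ℚ) := by
      intro w1
      have h2 : ∀ w2 : Fin n, (G.dist u (w1, w2) : ℚ)
          = ((min (w1 - u.1).val (u.1 - w1).val : ℕ) : ℚ) + ((min (w2 - u.2).val (u.2 - w2).val : ℕ) : ℚ) := by
        intro w2
        rw [hdist u (w1, w2)]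
        push_cast
        ring
      rw [Finset.sum_congr rfl (fun w2 _ => h2 w2), Finset.sum_add_distrib,
        Finset.sum_const, Finset.card_univ, Fintype.card_fin, nsmul_eq_mul]
    rw [Finset.sum_congr rfl (fun w1 _ => h1 w1), Finset.sum_add_distrib,
      ← Finset.mul_sum, Finset.sum_const, Finset.card_univ, Fintype.card_fin, nsmul_eq_mul]
    have hcm : ∑ w1 : Fin m, ((min (w1 - u.1).val (u.1 - w1).val : ℕ) : ℚ) = (Sm : ℚ) := by
      rw [← Nat.cast_sum, hrowm u.1]
    have hcn : ∑ w2 : Fin n, ((min (w2 - u.2).val (u.2 - w2).val : ℕ) : ℚ) = (Sn : ℚ) := by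
      rw [← Nat.cast_sum, hrown u.2]
    rw [hcm, hcn]
  -- total inner sum
  have hinner : ∑ u : Fin m × Fin n, ∑ w : Fin m × Fin n,
      (if u ≠ w then (G.dist u w : ℚ) - 1 else 0)
      = (m*n : ℚ) * ((n * Sm + m * Sn : ℚ) - ((m : ℚ) * n - 1)) := by
    have hterm : ∀ u w : Fin m × Fin n, (if u ≠ w then (G.dist u w : ℚ) - 1 else 0)
        = (G.dist u w : ℚ) - (if u = w then 0 else 1) := by
      intro u w
      by_cases h : u = w
      · subst h
        simp [SimpleGraph.dist_self]
      · simp [h]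
    have hionesum : ∀ u : Fin m × Fin n, ∑ w : Fin m × Fin n, (if u = w then (0:ℚ) else 1)
        = (m : ℚ) * n - 1 := by
      intro u
      have : ∀ w : Fin m × Fin n, (if u = w then (0:ℚ) else 1) = 1 - (if u = w then 1 else 0) := by
        intro w
        by_cases h : u = w <;> simp [h]
      rw [Finset.sum_congr rfl (fun w _ => this w), Finset.sum_sub_distrib,
        Finset.sum_const, Finset.card_univ, hcard, Finset.sum_ite_eq Finset.univ u (fun _ => (1:ℚ)),
        if_pos (Finset.mem_univ u)]
      push_cast
      ring
    calc ∑ u : Fin m × Fin n, ∑ w : Fin m × Fin n, (if u ≠ w then (G.dist u w : ℚ) - 1 else 0)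
        = ∑ u : Fin m × Fin n, (((n * Sm + m * Sn : ℚ)) - ((m : ℚ) * n - 1)) := by
          refine Finset.sum_congr rfl (fun u _ => ?_)
          rw [Finset.sum_congr rfl (fun w _ => hterm u w), Finset.sum_sub_distrib,
            hrow u, hionesum u]
      _ = (m*n : ℚ) * ((n * Sm + m * Sn : ℚ) - ((m : ℚ) * n - 1)) := by
          rw [Finset.sum_const, Finset.card_univ, hcard, nsmul_eq_mul]
          push_cast
          ring
  rw [hinner] at hsum
  -- solve for betweenness
  have hN : ((m : ℚ) * n) ≠ 0 := by
    have h0 : 0 < m * n := Nat.mul_pos (by omega) (by omega)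
    have h1 : ((m*n : ℕ):ℚ) ≠ 0 := Nat.cast_ne_zero.mpr h0.ne'
    push_cast at h1
    exact h1
  have hBv : betweenness G v = (1/2) * ((n * Sm + m * Sn : ℚ) - ((m : ℚ) * n - 1)) := by
    have h2 : ((m * n : ℕ) : ℚ) * betweenness G v
        = (1/2) * ((m : ℚ) * n * ((n * Sm + m * Sn : ℚ) - ((m : ℚ) * n - 1))) := by
      rw [← nsmul_eq_mul]
      exact hsum
    have h3 : ((m * n : ℕ) : ℚ) = (m : ℚ) * n := by push_cast; ring
    rw [h3] at h2
    apply mul_left_cancel₀ hN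
    rw [h2]
    ring
  have hSm4 : 4 * Sm = m * m - m % 2 := by rw [hSm, fin_sum_min]; exact sum_min_eq m
  have hSn4 : 4 * Sn = n * n - n % 2 := by rw [hSn, fin_sum_min]; exact sum_min_eq n
  refine ⟨?_, ?_, ?_⟩
  · rintro ⟨a, ha⟩ ⟨b, hb⟩
    have hSmv : Sm = a*a + a := by
      have e1 : m * m = 4*(a*a+a) + 1 := by rw [ha]; ring
      have e2 : m % 2 = 1 := by omega
      generalize a*a = P at e1 hSm4 ⊢
      omega
    have hSnv : Sn = b*b + b := by
      have e1 : n * n = 4*(b*b+b) + 1 := by rw [hb]; ring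
      have e2 : n % 2 = 1 := by omega
      generalize b*b = P at e1 hSn4 ⊢
      omega
    rw [hBv, hSmv, hSnv, ha, hb]
    push_cast
    ring
  · rintro ⟨a, ha⟩ ⟨b, hb⟩
    have hSmv : Sm = a*a := by
      have e1 : m * m = 4*(a*a) := by rw [ha]; ring
      have e2 : m % 2 = 0 := by omega
      generalize a*a = P at e1 hSm4 ⊢
      omega
    have hSnv : Sn = b*b := by
      have e1 : n * n = 4*(b*b) := by rw [hb]; ring
      have e2 : n % 2 = 0 := by omega
      generalize b*b = P at e1 hSn4 ⊢
      omega
    rw [hBv, hSmv, hSnv, ha, hb]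
    push_cast
    ring
  · rintro ⟨a, ha⟩ ⟨b, hb⟩
    have hSmv : Sm = a*a + a := by
      have e1 : m * m = 4*(a*a+a) + 1 := by rw [ha]; ring
      have e2 : m % 2 = 1 := by omega
      generalize a*a = P at e1 hSm4 ⊢
      omega
    have hSnv : Sn = b*b := by
      have e1 : n * n = 4*(b*b) := by rw [hb]; ring
      have e2 : n % 2 = 0 := by omega
      generalize b*b = P at e1 hSn4 ⊢
      omega
    rw [hBv, hSmv, hSnv, ha, hb]
    push_cast
    ring
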